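/- If ω is a graded symplectic structure on M(n|m), then the map M ↦ D_M from M(n|m) to graded derivations is a Lie superalgebra homomorphism (with respect to the graded Poisson bracket and the graded commutator of derivations), its kernel is ℂ·1_{n+m}, and every graded derivation of M(n|m) is Hamiltonian. -/

import Mathlib

noncomputable section

/-- The `ℤ₂`-graded algebra `M(n|m)` of complex `(n+m)×(n+m)` matrices. -/
abbrev GMat (n m : ℕ) := Matrix (Fin (n + m)) (Fin (n + m)) ℂ

/-- The "body" matrix algebra `M_{max n m}(ℂ)`. -/
abbrev BMat (n m : ℕ) := Matrix (Fin (max n m)) (Fin (max n m)) ℂ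

namespace GMat

/-- Block degree of an index: `false` for the first (size `n`) block. -/
def bdeg (n m : ℕ) (i : Fin (n + m)) : Bool := decide (n ≤ i.val)

/-- `M` is homogeneous of degree `ε` (block-diagonal for `ε = false`,
block-off-diagonal for `ε = true`). -/
def IsHomog (n m : ℕ) (ε : Bool) (M : GMat n m) : Prop :=
  ∀ i j, Bool.xor (bdeg n m i) (bdeg n m j) ≠ ε → M i j = 0

/-- The Koszul sign `(-1)^{ab}`. -/
def sgn (a b : Bool) : ℂ := if a && b then -1 else 1

/-- Graded commutator of homogeneous elements of degrees `a`, `b`. -/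
def gcomm {n m : ℕ} (a b : Bool) (A B : GMat n m) : GMat n m := A * B - sgn a b • (B * A)

/-- Graded anticommutator of homogeneous elements of degrees `a`, `b`. -/
def gacomm {n m : ℕ} (a b : Bool) (A B : GMat n m) : GMat n m := A * B + sgn a b • (B * A)

/-- The grading matrix `Γ = diag(1_n, -1_m)`. -/
def Gamma (n m : ℕ) : GMat n m := Matrix.diagonal fun i => if bdeg n m i then -1 else 1

/-- `D` is a graded derivation of `M(n|m)` of degree `ε`. -/
def IsGDer (n m : ℕ) (ε : Bool) (D : GMat n m → GMat n m) : Prop :=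
  (∀ A B, D (A + B) = D A + D B) ∧
  (∀ (c : ℂ) A, D (c • A) = c • D A) ∧
  (∀ (a : Bool) M, IsHomog n m a M → IsHomog n m (Bool.xor a ε) (D M)) ∧
  (∀ (a : Bool) (M M' : GMat n m), IsHomog n m a M →
    D (M * M') = D M * M' + sgn ε a • (M * D M'))

/-- The graded adjoint action `ad E` of a homogeneous matrix `E` of degree `a`:
on homogeneous `M` it is the graded commutator `[E,M]_g`. -/
def gad (n m : ℕ) (a : Bool) (E : GMat n m) : GMat n m → GMat n m :=
  fun M => E * M - (if a then Gamma n m * M * Gamma n m * E else M * E)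

/-- The supertrace `str M = Tr M₁ - Tr M₄`. -/
def str (n m : ℕ) (M : GMat n m) : ℂ :=
  ∑ i, (if bdeg n m i then (-1 : ℂ) else 1) * M i i

end GMat



namespace GMat

variable {n m : ℕ}

-- sgn basics
lemma sgn_comm (a b : Bool) : sgn a b = sgn b a := by cases a <;> cases b <;> rfl
lemma sgn_sq (a b : Bool) : sgn a b * sgn a b = 1 := by
  cases a <;> cases b <;> simp [sgn]

-- Gamma basics
lemma Gamma_mul_Gamma : Gamma n m * Gamma n m = 1 := by
  rw [Gamma, Matrix.diagonal_mul_diagonal]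
  ext i j
  by_cases h : i = j
  · subst h; by_cases hb : bdeg n m i <;>
      simp [Matrix.diagonal, Matrix.one_apply, hb]
  · simp [Matrix.diagonal, Matrix.one_apply, h]

lemma conj_homog {a : Bool} {M : GMat n m} (hM : IsHomog n m a M) :
    Gamma n m * M * Gamma n m = sgn a true • M := by
  ext i j
  rw [Gamma, Matrix.mul_diagonal, Matrix.diagonal_mul]
  by_cases h : M i j = 0
  · simp [h]
  · have hd : Bool.xor (bdeg n m i) (bdeg n m j) = a := by
      by_contra hc; exact h (hM i j hc)
    subst hd
    cases hbi : bdeg n m i <;> cases hbj : bdeg n m j <;>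
      simp [sgn, hbi, hbj, Matrix.smul_apply]

-- homogeneity basics
lemma homog_zero (a : Bool) : IsHomog n m a (0 : GMat n m) := fun _ _ _ => rfl
lemma homog_add {a : Bool} {A B : GMat n m} (hA : IsHomog n m a A) (hB : IsHomog n m a B) :
    IsHomog n m a (A + B) := by
  intro i j hij; simp [Matrix.add_apply, hA i j hij, hB i j hij]
lemma homog_smul {a : Bool} (k : ℂ) {A : GMat n m} (hA : IsHomog n m a A) :
    IsHomog n m a (k • A) := by
  intro i j hij; simp [Matrix.smul_apply, hA i j hij]
lemma homog_neg {a : Bool} {A : GMat n m} (hA : IsHomog n m a A) : IsHomog n m a (-A) := by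
  intro i j hij; simp [Matrix.neg_apply, hA i j hij]
lemma homog_sub {a : Bool} {A B : GMat n m} (hA : IsHomog n m a A) (hB : IsHomog n m a B) :
    IsHomog n m a (A - B) := by
  intro i j hij; simp [Matrix.sub_apply, hA i j hij, hB i j hij]
lemma homog_one : IsHomog n m false (1 : GMat n m) := by
  intro i j hij
  have : i ≠ j := by rintro rfl; simp at hij
  simp [Matrix.one_apply, this]
lemma homog_mul {a b : Bool} {A B : GMat n m} (hA : IsHomog n m a A) (hB : IsHomog n m b B) :
    IsHomog n m (Bool.xor a b) (A * B) := by
  intro i j hij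
  rw [Matrix.mul_apply]
  apply Finset.sum_eq_zero
  intro k _
  by_cases hAk : A i k = 0
  · simp [hAk]
  · have ha : Bool.xor (bdeg n m i) (bdeg n m k) = a := by
      by_contra hc; exact hAk (hA i k hc)
    have hb : B k j = 0 := by
      apply hB
      intro hbv
      apply hij
      rw [← ha, ← hbv]
      cases bdeg n m i <;> cases bdeg n m k <;> cases bdeg n m j <;> rfl
    simp [hb]
lemma homog_gcomm {a b : Bool} {A B : GMat n m} (hA : IsHomog n m a A) (hB : IsHomog n m b B) :
    IsHomog n m (Bool.xor a b) (gcomm a b A B) := by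
  apply homog_sub (homog_mul hA hB)
  apply homog_smul
  have := homog_mul hB hA
  rwa [Bool.xor_comm] at this

lemma eq_zero_of_homog_both {a b : Bool} {M : GMat n m} (hab : a ≠ b)
    (hA : IsHomog n m a M) (hB : IsHomog n m b M) : M = 0 := by
  ext i j
  by_cases hd : Bool.xor (bdeg n m i) (bdeg n m j) = a
  · rw [hB i j (by rw [hd]; exact hab)]; rfl
  · rw [hA i j hd]; rfl

-- str basics
lemma str_add (A B : GMat n m) : str n m (A + B) = str n m A + str n m B := by
  simp [str, Matrix.add_apply, mul_add, Finset.sum_add_distrib]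
lemma str_smul (k : ℂ) (A : GMat n m) : str n m (k • A) = k * str n m A := by
  simp [str, Matrix.smul_apply, Finset.mul_sum]
lemma str_zero : str n m (0 : GMat n m) = 0 := by simp [str]
lemma str_sub (A B : GMat n m) : str n m (A - B) = str n m A - str n m B := by
  simp [str, Matrix.sub_apply, mul_sub, Finset.sum_sub_distrib]
lemma str_one : str n m (1 : GMat n m) = (n : ℂ) - m := by
  rw [str]
  have : ∀ i : Fin (n+m), (if bdeg n m i then (-1:ℂ) else 1) * (1 : GMat n m) i i
      = (if bdeg n m i then (-1:ℂ) else 1) := by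
    intro i; simp [Matrix.one_apply]
  rw [Finset.sum_congr rfl (fun i _ => this i), Fin.sum_univ_add]
  have h1 : ∀ i : Fin n, bdeg n m (Fin.castAdd m i) = false := by
    intro i; simp [bdeg, Fin.castAdd]
  have h2 : ∀ j : Fin m, bdeg n m (Fin.natAdd n j) = true := by
    intro j; simp [bdeg, Fin.natAdd]
  simp [h1, h2]; ring
lemma str_homog_true {M : GMat n m} (hM : IsHomog n m true M) : str n m M = 0 := by
  rw [str]
  apply Finset.sum_eq_zero
  intro i _
  rw [hM i i (by simp)]; ring
lemma str_mul_sgn {a b : Bool} {A B : GMat n m} (hA : IsHomog n m a A) (hB : IsHomog n m b B) :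
    str n m (A * B) = sgn a b * str n m (B * A) := by
  rw [str, str, Finset.mul_sum]
  simp only [Matrix.mul_apply, Finset.mul_sum]
  rw [Finset.sum_comm]
  apply Finset.sum_congr rfl
  intro k _
  apply Finset.sum_congr rfl
  intro i _
  by_cases hAk : A i k = 0
  · simp [hAk]
  by_cases hBk : B k i = 0
  · simp [hBk]
  have ha : Bool.xor (bdeg n m i) (bdeg n m k) = a := by
    by_contra hc; exact hAk (hA i k hc)
  have hb : Bool.xor (bdeg n m k) (bdeg n m i) = b := by
    by_contra hc; exact hBk (hB k i hc)
  subst ha; subst hb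
  cases bdeg n m i <;> cases bdeg n m k <;> simp [sgn] <;> ring
lemma str_gcomm {a b : Bool} {A B : GMat n m} (hA : IsHomog n m a A) (hB : IsHomog n m b B) :
    str n m (gcomm a b A B) = 0 := by
  rw [gcomm, str_sub, str_smul, str_mul_sgn hA hB]
  ring

-- gad basics
lemma gad_add_right (a : Bool) (E X Y : GMat n m) :
    gad n m a E (X + Y) = gad n m a E X + gad n m a E Y := by
  simp only [gad, mul_add, add_mul]
  cases a <;> simp <;> abel
lemma gad_smul_right (a : Bool) (k : ℂ) (E X : GMat n m) :
    gad n m a E (k • X) = k • gad n m a E X := by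
  simp only [gad, Matrix.mul_smul, Matrix.smul_mul, smul_sub]
  cases a <;> simp [Matrix.mul_smul, Matrix.smul_mul]
lemma gad_neg_right (a : Bool) (E X : GMat n m) :
    gad n m a E (-X) = -gad n m a E X := by
  have := gad_smul_right a (-1 : ℂ) E X
  simpa using this
lemma gad_add_left (a : Bool) (E F X : GMat n m) :
    gad n m a (E + F) X = gad n m a E X + gad n m a F X := by
  simp only [gad, add_mul, mul_add]
  cases a <;> simp <;> abel
lemma gad_zero_left (a : Bool) (X : GMat n m) : gad n m a (0 : GMat n m) X = 0 := by
  cases a <;> simp [gad]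
lemma gad_smul_one (a : Bool) (E : GMat n m) (k : ℂ) :
    gad n m a E (k • (1 : GMat n m)) = 0 := by
  cases a <;>
    simp [gad, Matrix.mul_smul, Matrix.smul_mul, Gamma_mul_Gamma, mul_assoc]

set_option maxHeartbeats 2000000 in
lemma gad_gcomm {a b : Bool} {E F : GMat n m} (hE : IsHomog n m a E) (hF : IsHomog n m b F)
    (X : GMat n m) :
    gad n m (Bool.xor a b) (gcomm a b E F) X =
      gad n m a E (gad n m b F X) - sgn a b • gad n m b F (gad n m a E X) := by
  have hgg : Gamma n m * Gamma n m = 1 := Gamma_mul_Gamma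
  have hE' := conj_homog hE
  have hF' := conj_homog hF
  have base : ∀ (Z t : GMat n m), (Gamma n m * Z * Gamma n m) * (Gamma n m * t)
      = Gamma n m * (Z * t) := by
    intro Z t
    rw [mul_assoc (Gamma n m * Z) (Gamma n m) (Gamma n m * t), ← mul_assoc (Gamma n m)
      (Gamma n m) t, hgg, one_mul, mul_assoc]
  have hEp : ∀ t, Gamma n m * (E * t) = sgn a true • (E * (Gamma n m * t)) := by
    intro t; rw [← base E t, hE', smul_mul_assoc]
  have hFp : ∀ t, Gamma n m * (F * t) = sgn b true • (F * (Gamma n m * t)) := by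
    intro t; rw [← base F t, hF', smul_mul_assoc]
  have hE1 : Gamma n m * E = sgn a true • (E * Gamma n m) := by
    simpa using hEp 1
  have hF1 : Gamma n m * F = sgn b true • (F * Gamma n m) := by
    simpa using hFp 1
  have hGp : ∀ t : GMat n m, Gamma n m * (Gamma n m * t) = t := by
    intro t; rw [← mul_assoc, hgg, one_mul]
  clear hE' hF' base hE hF
  cases a <;> cases b <;>
    norm_num [sgn] at hEp hFp hE1 hF1 <;>
    simp only [gcomm, gad, sgn] <;> norm_num <;>
    simp only [mul_assoc, sub_mul, mul_sub, add_mul, mul_add, neg_mul, mul_neg,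
      hEp, hFp, hE1, hF1, hGp, hgg, mul_one, neg_neg, smul_mul_assoc, mul_smul_comm,
      neg_smul, one_smul, sub_neg_eq_add] <;>
    abel

section Scalar

lemma homog_std (i j : Fin (n+m)) (c : ℂ) :
    IsHomog n m (Bool.xor (bdeg n m i) (bdeg n m j)) (Matrix.single i j c) := by
  intro k l hkl
  apply Matrix.single_apply_of_ne
  rintro ⟨rfl, rfl⟩
  exact hkl rfl

lemma str_std_offdiag {i j : Fin (n+m)} (hij : i ≠ j) (c : ℂ) :
    str n m (Matrix.single i j c) = 0 := by
  rw [str]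
  apply Finset.sum_eq_zero
  intro k _
  have : Matrix.single i j c k k = 0 := by
    apply Matrix.single_apply_of_ne
    rintro ⟨rfl, rfl⟩
    exact hij rfl
  rw [this]; ring

/-- A matrix commuting with all off-diagonal matrix units is scalar. -/
lemma scalar_of_comm_units (hnm : n ≠ m) {Z : GMat n m}
    (hc : ∀ i j : Fin (n+m), i ≠ j →
      Matrix.single i j (1:ℂ) * Z = Z * Matrix.single i j (1:ℂ)) :
    ∃ k : ℂ, Z = k • (1 : GMat n m) := by
  have hpos : 0 < n + m := by omega
  set z : Fin (n+m) := ⟨0, hpos⟩ with hz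
  refine ⟨Z z z, ?_⟩
  have key : ∀ (i j : Fin (n+m)), i ≠ j → ∀ l, Z j l = if j = l then Z i i else 0 := by
    intro i j hij l
    have h := congrFun (congrFun (hc i j hij) i) l
    rw [Matrix.single_mul_apply_same, one_mul] at h
    by_cases hl : j = l
    · subst hl
      rw [Matrix.mul_single_apply_same, mul_one] at h
      simp [h]
    · rw [Matrix.mul_single_apply_of_ne (hbj := fun hh => hl hh.symm)] at h
      simp [h, hl]
  ext p q
  by_cases hpq : p = q
  · subst hpq
    by_cases hp : p = z
    · subst hp; simp [Matrix.one_apply]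
    · have := key z p (fun hh => hp hh.symm) p
      simp at this
      simp [Matrix.one_apply, this]
  · have hq : q ≠ p := fun hh => hpq hh.symm
    have := key q p hq q
    simp [hpq] at this
    simp [Matrix.one_apply, hpq, this]

/-- A homogeneous matrix killed by all homogeneous supertraceless `gad`s is scalar. -/
lemma scalar_of_gad_zero (hnm : n ≠ m) {c : Bool} {M : GMat n m} (hM : IsHomog n m c M)
    (hz : ∀ (a : Bool) (E : GMat n m), str n m E = 0 → IsHomog n m a E →
      gad n m a E M = 0) :
    ∃ k : ℂ, M = k • (1 : GMat n m) := by
  have hMc := conj_homog hM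
  cases c
  · -- even case: M commutes with all off-diagonal units
    norm_num [sgn] at hMc
    apply scalar_of_comm_units hnm
    intro i j hij
    have h0 := hz (Bool.xor (bdeg n m i) (bdeg n m j)) (Matrix.single i j 1)
      (str_std_offdiag hij 1) (homog_std i j 1)
    rw [gad, hMc, ite_self, sub_eq_zero] at h0
    exact h0
  · -- odd case: M = 0
    refine ⟨0, ?_⟩
    rw [zero_smul]
    ext i j
    by_cases hd : Bool.xor (bdeg n m i) (bdeg n m j) = true
    · have hij : i ≠ j := by
        rintro rfl; simp at hd
      have h0 := hz (Bool.xor (bdeg n m j) (bdeg n m i)) (Matrix.single j i 1)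
        (str_std_offdiag (fun hh => hij hh.symm) 1) (homog_std j i 1)
      have hd' : Bool.xor (bdeg n m j) (bdeg n m i) = true := by
        rw [Bool.xor_comm]; exact hd
      rw [hd', gad, if_pos rfl, hMc] at h0
      have h0' := congrFun (congrFun h0 j) j
      rw [Matrix.sub_apply, Matrix.single_mul_apply_same,
        Matrix.mul_single_apply_of_ne (hbj := fun hh => hij hh.symm)] at h0'
      have : M i j = 0 := by simpa using h0'
      simp [this]
    · exact hM i j hd

end Scalar

-- homogeneous decomposition
def evenPart (M : GMat n m) : GMat n m := (2 : ℂ)⁻¹ • (M + Gamma n m * M * Gamma n m)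
def oddPart (M : GMat n m) : GMat n m := (2 : ℂ)⁻¹ • (M - Gamma n m * M * Gamma n m)

lemma conj_apply (M : GMat n m) (i j : Fin (n+m)) :
    (Gamma n m * M * Gamma n m) i j
      = ((if bdeg n m i then (-1:ℂ) else 1) * (if bdeg n m j then (-1:ℂ) else 1)) * M i j := by
  rw [Gamma, Matrix.mul_diagonal, Matrix.diagonal_mul]; ring

lemma evenPart_homog (M : GMat n m) : IsHomog n m false (evenPart M) := by
  intro i j hij
  have hd : Bool.xor (bdeg n m i) (bdeg n m j) = true := by
    cases h1 : bdeg n m i <;> cases h2 : bdeg n m j <;> simp [h1, h2] at hij ⊢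
  rw [evenPart, Matrix.smul_apply, Matrix.add_apply, conj_apply]
  have : ((if bdeg n m i then (-1:ℂ) else 1) * (if bdeg n m j then (-1:ℂ) else 1)) = -1 := by
    cases h1 : bdeg n m i <;> cases h2 : bdeg n m j <;> simp [h1, h2] at hd ⊢
  rw [this, neg_one_mul, add_neg_cancel, smul_zero]

lemma oddPart_homog (M : GMat n m) : IsHomog n m true (oddPart M) := by
  intro i j hij
  have hd : Bool.xor (bdeg n m i) (bdeg n m j) = false := by
    cases h1 : bdeg n m i <;> cases h2 : bdeg n m j <;> simp [h1, h2] at hij ⊢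
  rw [oddPart, Matrix.smul_apply, Matrix.sub_apply, conj_apply]
  have : ((if bdeg n m i then (-1:ℂ) else 1) * (if bdeg n m j then (-1:ℂ) else 1)) = 1 := by
    cases h1 : bdeg n m i <;> cases h2 : bdeg n m j <;> simp [h1, h2] at hd ⊢
  rw [this, one_mul, sub_self, smul_zero]

lemma evenPart_add_oddPart (M : GMat n m) : evenPart M + oddPart M = M := by
  rw [evenPart, oddPart, ← smul_add]
  have : (M + Gamma n m * M * Gamma n m) + (M - Gamma n m * M * Gamma n m) = (2:ℂ) • M := by
    rw [two_smul]; abel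
  rw [this, smul_smul]
  norm_num

/-- Every additive, ℂ-linear map satisfying the plain Leibniz rule against
homogeneous left factors is an inner derivation. -/
lemma exists_inner (hpos : 0 < n + m) (D : GMat n m → GMat n m)
    (hadd : ∀ A B, D (A + B) = D A + D B)
    (hsmul : ∀ (c : ℂ) A, D (c • A) = c • D A)
    (hleib : ∀ (M M' : GMat n m), (∃ a, IsHomog n m a M) → D (M * M') = D M * M' + M * D M') :
    ∃ A : GMat n m, ∀ X, D X = A * X - X * A := by
  classical
  set z : Fin (n+m) := ⟨0, hpos⟩ with hz
  set e : Fin (n+m) → Fin (n+m) → GMat n m := fun i j => Matrix.single i j (1:ℂ)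
    with he
  have hzero : D 0 = 0 := by
    have := hsmul 0 0
    simpa using this
  have ehom : ∀ i j, ∃ a, IsHomog n m a (e i j) := fun i j => ⟨_, homog_std i j 1⟩
  obtain ⟨A, hA⟩ : ∃ A : GMat n m, A = ∑ i, D (e i z) * e z i := ⟨_, rfl⟩
  refine ⟨A, ?_⟩
  have hstd : ∀ p q, D (e p q) = A * e p q - e p q * A := by
    intro p q
    have hAe : A * e p q = D (e p z) * e z q := by
      rw [hA, Finset.sum_mul]
      rw [Finset.sum_eq_single p]
      · rw [mul_assoc]
        congr 1
        simp [he, Matrix.single_mul_single_same]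
      · intro i _ hip
        rw [mul_assoc]
        have : e z i * e p q = 0 := by
          simp only [he]
          exact Matrix.single_mul_single_of_ne _ _ _ _ hip _
        rw [this, mul_zero]
      · intro hmem; exact absurd (Finset.mem_univ p) hmem
    have heA : e p q * A = D (e p z) * e z q - D (e p q) := by
      rw [hA, Finset.mul_sum]
      have hterm : ∀ i : Fin (n+m), e p q * (D (e i z) * e z i)
          = (if q = i then D (e p z) * e z i else 0) - D (e p q) * (e i z * e z i) := by
        intro i
        have hl := hleib (e p q) (e i z) (ehom p q)
        have : e p q * D (e i z) = D (e p q * e i z) - D (e p q) * e i z := by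
          rw [hl]; abel
        rw [← mul_assoc, this, sub_mul, mul_assoc]
        congr 1
        by_cases hqi : q = i
        · subst hqi
          rw [if_pos rfl]
          congr 1
          · congr 1
            simp [he, Matrix.single_mul_single_same]
        · rw [if_neg hqi]
          have : e p q * e i z = 0 := by
            simp only [he]
            exact Matrix.single_mul_single_of_ne _ _ _ _ hqi _
          rw [this, hzero, zero_mul]
      rw [Finset.sum_congr rfl (fun i _ => hterm i), Finset.sum_sub_distrib]
      congr 1
      · rw [Finset.sum_ite_eq Finset.univ q (fun i => D (e p z) * e z i)]
        simp
      · rw [← Finset.mul_sum]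
        have : (∑ i, e i z * e z i) = 1 := by
          ext r s
          rw [Matrix.sum_apply]
          simp only [he, Matrix.single_mul_single_same, one_mul]
          by_cases hrs : r = s
          · subst hrs
            rw [Finset.sum_eq_single r]
            · simp [Matrix.one_apply]
            · intro b _ hbr
              apply Matrix.single_apply_of_ne
              rintro ⟨rfl, -⟩; exact hbr rfl
            · intro hmem; exact absurd (Finset.mem_univ r) hmem
          · rw [Matrix.one_apply_ne hrs]
            apply Finset.sum_eq_zero
            intro b _
            apply Matrix.single_apply_of_ne
            rintro ⟨rfl, rfl⟩; exact hrs rfl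
        rw [this, mul_one]
    rw [hAe, heA]
    abel
  -- extend to all matrices by linearity
  intro X
  have hXsum : X = ∑ p : Fin (n+m), ∑ q : Fin (n+m), X p q • e p q := by
    simpa [he] using Matrix.matrix_eq_sum_single X
  have hDsum : ∀ (s : Finset (Fin (n+m))) (f : Fin (n+m) → GMat n m),
      D (∑ i ∈ s, f i) = ∑ i ∈ s, D (f i) := by
    intro s f
    induction s using Finset.induction_on with
    | empty => simpa using hzero
    | insert _ _ hx ih =>
      rw [Finset.sum_insert hx, hadd, ih, Finset.sum_insert hx]
  conv_lhs => rw [hXsum]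
  rw [hDsum]
  have hrow : ∀ p, D (∑ q, X p q • e p q) = ∑ q, X p q • (A * e p q - e p q * A) := by
    intro p
    rw [hDsum]
    apply Finset.sum_congr rfl
    intro q _
    rw [hsmul, hstd]
  rw [Finset.sum_congr rfl (fun p _ => hrow p)]
  conv_rhs => rw [hXsum]
  rw [Finset.mul_sum, Finset.sum_mul, ← Finset.sum_sub_distrib]
  apply Finset.sum_congr rfl
  intro p _
  rw [Finset.mul_sum, Finset.sum_mul, ← Finset.sum_sub_distrib]
  apply Finset.sum_congr rfl
  intro q _
  rw [Matrix.mul_smul, Matrix.smul_mul, ← smul_sub]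

lemma homog_cast {a b : Bool} {M : GMat n m} (hab : a = b) (hM : IsHomog n m a M) :
    IsHomog n m b M := hab ▸ hM

lemma conj_swap {a : Bool} {E : GMat n m} (hE : IsHomog n m a E) (t : GMat n m) :
    Gamma n m * (E * t) = sgn a true • (E * (Gamma n m * t)) := by
  have hgg : Gamma n m * Gamma n m = 1 := Gamma_mul_Gamma
  have : (Gamma n m * E * Gamma n m) * (Gamma n m * t) = Gamma n m * (E * t) := by
    rw [mul_assoc (Gamma n m * E) (Gamma n m) (Gamma n m * t), ← mul_assoc (Gamma n m)
      (Gamma n m) t, hgg, one_mul, mul_assoc]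
  rw [← this, conj_homog hE, smul_mul_assoc]

/-- Every graded derivation of degree `ε` is `gad ε E₀` for a homogeneous
supertraceless `E₀`. -/
lemma gder_inner (hnm : n ≠ m) {ε : Bool} {D : GMat n m → GMat n m}
    (hD : IsGDer n m ε D) :
    ∃ E₀ : GMat n m, IsHomog n m ε E₀ ∧ str n m E₀ = 0 ∧
      ∀ X, D X = gad n m ε E₀ X := by
  have hpos : 0 < n + m := by omega
  have hgg : Gamma n m * Gamma n m = 1 := Gamma_mul_Gamma
  obtain ⟨hadd, hsmul, hgrade, hleib⟩ := hD
  cases ε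
  · -- even derivation
    have hleib' : ∀ (M M' : GMat n m), (∃ a, IsHomog n m a M) →
        D (M * M') = D M * M' + M * D M' := by
      rintro M M' ⟨a, ha⟩
      rw [hleib a M M' ha]
      have : sgn false a = 1 := by cases a <;> rfl
      rw [this, one_smul]
    obtain ⟨A, hA⟩ := exists_inner hpos D hadd hsmul hleib'
    set P := evenPart A with hP
    set Q := oddPart A with hQ
    have hsplit : ∀ X, A * X - X * A = (P * X - X * P) + (Q * X - X * Q) := by
      intro X
      have : P + Q = A := evenPart_add_oddPart A
      rw [← this, add_mul, mul_add]
      abel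
    have hQhom : ∀ (x : Bool) (M : GMat n m), IsHomog n m x M → Q * M - M * Q = 0 := by
      intro x M hM
      have h1 : IsHomog n m x (D M) := by
        have := hgrade x M hM
        rwa [Bool.xor_false] at this
      have h2 : IsHomog n m x (P * M - M * P) :=
        homog_sub (homog_cast (by simp) (homog_mul (evenPart_homog A) hM))
          (homog_cast (by simp) (homog_mul hM (evenPart_homog A)))
      have h3 : Q * M - M * Q = D M - (P * M - M * P) := by
        rw [hA M, hsplit M]; abel
      have h4 : IsHomog n m x (Q * M - M * Q) := by
        rw [h3]; exact homog_sub h1 h2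
      have h5 : IsHomog n m (Bool.xor true x) (Q * M - M * Q) :=
        homog_sub (homog_mul (oddPart_homog A) hM)
          (homog_cast (by cases x <;> rfl) (homog_mul hM (oddPart_homog A)))
      exact eq_zero_of_homog_both (by cases x <;> simp) h5 h4
    have hQall : ∀ X : GMat n m, Q * X - X * Q = 0 := by
      intro X
      have hx := evenPart_add_oddPart X
      calc Q * X - X * Q
          = (Q * evenPart X - evenPart X * Q) + (Q * oddPart X - oddPart X * Q) := by
            conv_lhs => rw [← hx]
            rw [mul_add, add_mul]; abel
        _ = 0 := by
            rw [hQhom false (evenPart X) (evenPart_homog X),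
              hQhom true (oddPart X) (oddPart_homog X), add_zero]
    have hne : (n : ℂ) - m ≠ 0 := by
      intro hc
      apply hnm
      have : (n : ℂ) = m := by linear_combination hc
      exact_mod_cast this
    refine ⟨P - (str n m P / ((n:ℂ) - m)) • 1, ?_, ?_, ?_⟩
    · exact homog_sub (evenPart_homog A) (homog_smul _ homog_one)
    · rw [str_sub, str_smul, str_one, div_mul_cancel₀ _ hne, sub_self]
    · intro X
      rw [gad]
      rw [if_neg (by simp)]
      have : (P - (str n m P / ((n:ℂ) - m)) • 1) * X - X * (P - (str n m P / ((n:ℂ) - m)) • 1)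
          = (P * X - X * P) := by
        rw [sub_mul, mul_sub, Matrix.smul_mul, Matrix.mul_smul, one_mul, mul_one]
        abel
      rw [this, hA X, hsplit X, hQall X, add_zero]
  · -- odd derivation
    set D' : GMat n m → GMat n m := fun X => Gamma n m * D X with hD'
    have hadd' : ∀ A B, D' (A + B) = D' A + D' B := by
      intro A B; rw [hD']; simp only [hadd, mul_add]
    have hsmul' : ∀ (c : ℂ) A, D' (c • A) = c • D' A := by
      intro c A; rw [hD']; simp only [hsmul, Matrix.mul_smul]
    have hleib' : ∀ (M M' : GMat n m), (∃ a, IsHomog n m a M) →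
        D' (M * M') = D' M * M' + M * D' M' := by
      rintro M M' ⟨a, ha⟩
      rw [hD']
      simp only [hleib a M M' ha, mul_add]
      congr 1
      · rw [mul_assoc]
      · rw [mul_smul_comm, conj_swap ha (D M'), smul_smul, sgn_comm a true, sgn_sq, one_smul]
    obtain ⟨A, hA⟩ := exists_inner hpos D' hadd' hsmul' hleib'
    have hDX : ∀ X, D X = (Gamma n m * A) * X - Gamma n m * X * Gamma n m * (Gamma n m * A) := by
      intro X
      have h1 : Gamma n m * D X = A * X - X * A := hA X
      have h2 : D X = Gamma n m * (A * X - X * A) := by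
        rw [← h1, ← mul_assoc, hgg, one_mul]
      rw [h2, mul_sub, ← mul_assoc]
      congr 1
      calc Gamma n m * (X * A) = Gamma n m * (X * ((Gamma n m * Gamma n m) * A)) := by
            rw [hgg, one_mul]
        _ = Gamma n m * X * Gamma n m * (Gamma n m * A) := by
            simp only [mul_assoc]
    set B := Gamma n m * A with hB
    set P := evenPart B with hPd
    set Q := oddPart B with hQd
    have hPQ : P + Q = B := evenPart_add_oddPart B
    have hgadsplit : ∀ X, gad n m true B X = gad n m true P X + gad n m true Q X := by
      intro X
      rw [← hPQ, gad_add_left]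
    have hDgad : ∀ X, D X = gad n m true B X := by
      intro X
      rw [hDX X, gad, if_pos rfl]
    have hPkill_hom : ∀ (x : Bool) (M : GMat n m), IsHomog n m x M → gad n m true P M = 0 := by
      intro x M hM
      have hconjM : Gamma n m * M * Gamma n m = sgn x true • M := conj_homog hM
      have hDM : IsHomog n m (Bool.xor x true) (D M) := hgrade x M hM
      have hexp : D M = (P * M - sgn x true • (M * P)) + (Q * M - sgn x true • (M * Q)) := by
        rw [hDgad M, gad, if_pos rfl, hconjM, ← hPQ]
        rw [add_mul, Matrix.smul_mul, mul_add, smul_add]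
        abel
      have hPhom : IsHomog n m x (P * M - sgn x true • (M * P)) :=
        homog_sub (homog_cast (by simp) (homog_mul (evenPart_homog B) hM))
          (homog_smul _ (homog_cast (by simp) (homog_mul hM (evenPart_homog B))))
      have hQhom' : IsHomog n m (Bool.xor x true) (Q * M - sgn x true • (M * Q)) :=
        homog_sub (homog_cast (by cases x <;> rfl) (homog_mul (oddPart_homog B) hM))
          (homog_smul _ (homog_mul hM (oddPart_homog B)))
      have hPzero : P * M - sgn x true • (M * P) = 0 := by
        have heq : P * M - sgn x true • (M * P)
            = D M - (Q * M - sgn x true • (M * Q)) := by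
          rw [hexp]; abel
        have hh1 : IsHomog n m (Bool.xor x true) (P * M - sgn x true • (M * P)) := by
          rw [heq]; exact homog_sub hDM hQhom'
        exact eq_zero_of_homog_both (by cases x <;> simp) hPhom hh1
      rw [gad, if_pos rfl, hconjM, Matrix.smul_mul]
      exact hPzero
    have hPkill : ∀ X, gad n m true P X = 0 := by
      intro X
      have hx := evenPart_add_oddPart X
      calc gad n m true P X = gad n m true P (evenPart X + oddPart X) := by rw [hx]
        _ = gad n m true P (evenPart X) + gad n m true P (oddPart X) := gad_add_right _ _ _ _
        _ = 0 := by
            rw [hPkill_hom false (evenPart X) (evenPart_homog X),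
              hPkill_hom true (oddPart X) (oddPart_homog X), add_zero]
    refine ⟨Q, oddPart_homog B, str_homog_true (oddPart_homog B), ?_⟩
    intro X
    rw [hDgad X, hgadsplit X, hPkill X, zero_add]

end GMat


-- A graded symplectic structure on `M(n|m)` is an even, closed,
-- graded-alternating bilinear graded 2-form `ω` (recorded by its values on
-- the homogeneous graded derivations `ad E`, `E ∈ sl(n|m)`) such that for
-- every homogeneous `M` the equation `ω(D, D_M) = D M` has a unique solution
-- `D_M = ad (h c M)`; the graded Poisson bracket is
-- `{M,M'}_ω = ω(D_M, D_{M'})`.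

/-- For a graded symplectic structure `ω` on `M(n|m)`, the map `M ↦ D_M` is a
Lie superalgebra homomorphism from `(M(n|m), {·,·}_ω)` to the graded
derivations, its kernel is `ℂ·1`, and every graded derivation of `M(n|m)` is
Hamiltonian. -/
theorem symplectic_hamiltonian_map (n m : ℕ) (hnm : n ≠ m)
    (ω : Bool → GMat n m → Bool → GMat n m → GMat n m)
    (hadd1 : ∀ (a : Bool) (E E' : GMat n m) (b : Bool) (F : GMat n m),
      ω a (E + E') b F = ω a E b F + ω a E' b F)
    (hsmul1 : ∀ (k : ℂ) (a : Bool) (E : GMat n m) (b : Bool) (F : GMat n m),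
      ω a (k • E) b F = k • ω a E b F)
    (hadd2 : ∀ (a : Bool) (E : GMat n m) (b : Bool) (F F' : GMat n m),
      ω a E b (F + F') = ω a E b F + ω a E b F')
    (hsmul2 : ∀ (k : ℂ) (a : Bool) (E : GMat n m) (b : Bool) (F : GMat n m),
      ω a E b (k • F) = k • ω a E b F)
    (halt : ∀ (a : Bool) (E : GMat n m) (b : Bool) (F : GMat n m),
      ω b F a E = -(GMat.sgn a b) • ω a E b F)
    (heven : ∀ (a : Bool) (E : GMat n m) (b : Bool) (F : GMat n m),
      GMat.str n m E = 0 → GMat.str n m F = 0 →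
      GMat.IsHomog n m a E → GMat.IsHomog n m b F →
      GMat.IsHomog n m (Bool.xor a b) (ω a E b F))
    (hclosed : ∀ (a b c : Bool) (E F G : GMat n m),
      GMat.str n m E = 0 → GMat.str n m F = 0 → GMat.str n m G = 0 →
      GMat.IsHomog n m a E → GMat.IsHomog n m b F → GMat.IsHomog n m c G →
      GMat.gad n m a E (ω b F c G) - GMat.sgn a b • GMat.gad n m b F (ω a E c G) +
        (GMat.sgn a c * GMat.sgn b c) • GMat.gad n m c G (ω a E b F) -
        ω (Bool.xor a b) (GMat.gcomm a b E F) c G +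
        GMat.sgn b c • ω (Bool.xor a c) (GMat.gcomm a c E G) b F +
        ω a E (Bool.xor b c) (GMat.gcomm b c F G) = 0)
    (h : Bool → GMat n m → GMat n m)
    (hHam : ∀ (c : Bool) (M : GMat n m), GMat.IsHomog n m c M →
      GMat.str n m (h c M) = 0 ∧ GMat.IsHomog n m c (h c M) ∧
      ∀ (a : Bool) (E : GMat n m), GMat.str n m E = 0 → GMat.IsHomog n m a E →
        ω a E c (h c M) = GMat.gad n m a E M)
    (hUniq : ∀ (c : Bool) (M : GMat n m), GMat.IsHomog n m c M →
      ∀ N : GMat n m, GMat.str n m N = 0 → GMat.IsHomog n m c N →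
        (∀ (a : Bool) (E : GMat n m), GMat.str n m E = 0 →
          GMat.IsHomog n m a E → ω a E c N = GMat.gad n m a E M) →
        N = h c M) :
    (∀ (c c' : Bool) (M M' : GMat n m), GMat.IsHomog n m c M →
      GMat.IsHomog n m c' M' → ∀ X : GMat n m,
      GMat.gad n m (Bool.xor c c')
          (h (Bool.xor c c') (ω c (h c M) c' (h c' M'))) X =
        GMat.gad n m c (h c M) (GMat.gad n m c' (h c' M') X) -
          GMat.sgn c c' • GMat.gad n m c' (h c' M') (GMat.gad n m c (h c M) X)) ∧
    (∀ (c : Bool) (M : GMat n m), GMat.IsHomog n m c M →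
      ((∀ X : GMat n m, GMat.gad n m c (h c M) X = 0) ↔
        ∃ k : ℂ, M = k • (1 : GMat n m))) ∧
    (∀ (ε : Bool) (D : GMat n m → GMat n m), GMat.IsGDer n m ε D →
      ∃ M : GMat n m, GMat.IsHomog n m ε M ∧
        ∀ X : GMat n m, D X = GMat.gad n m ε (h ε M) X) := by
  classical
  have hne : (n : ℂ) - m ≠ 0 := by
    intro hc
    apply hnm
    have : (n : ℂ) = m := by linear_combination hc
    exact_mod_cast this
  have hω0 : ∀ (a : Bool) (E : GMat n m) (c : Bool), ω a E c 0 = 0 := by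
    intro a E c
    have := hsmul2 0 a E c 0
    simpa using this
  refine ⟨?_, ?_, ?_⟩
  · -- Part 1: Lie superalgebra homomorphism
    intro c c' M M' hM hM' X
    obtain ⟨strhM, homhM, hamM⟩ := hHam c M hM
    obtain ⟨strhM', homhM', hamM'⟩ := hHam c' M' hM'
    have homW : GMat.IsHomog n m (Bool.xor c c') (ω c (h c M) c' (h c' M')) :=
      heven c _ c' _ strhM strhM' homhM homhM'
    have hW : ω c (h c M) c' (h c' M') = GMat.gad n m c (h c M) M' :=
      hamM' c (h c M) strhM homhM
    have hNchar : ∀ (a : Bool) (E : GMat n m), GMat.str n m E = 0 →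
        GMat.IsHomog n m a E →
        ω a E (Bool.xor c c') (GMat.gcomm c c' (h c M) (h c' M'))
          = GMat.gad n m a E (ω c (h c M) c' (h c' M')) := by
      intro a E hstrE homE
      have Hcl := hclosed a c c' E (h c M) (h c' M') hstrE strhM strhM' homE homhM homhM'
      rw [hamM' a E hstrE homE] at Hcl
      rw [hamM a E hstrE homE] at Hcl
      rw [hamM' (Bool.xor a c) (GMat.gcomm a c E (h c M))
        (GMat.str_gcomm homE homhM) (GMat.homog_gcomm homE homhM)] at Hcl
      rw [hamM (Bool.xor a c') (GMat.gcomm a c' E (h c' M'))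
        (GMat.str_gcomm homE homhM') (GMat.homog_gcomm homE homhM')] at Hcl
      rw [hW] at Hcl ⊢
      rw [GMat.gad_gcomm homE homhM M', GMat.gad_gcomm homE homhM' M] at Hcl
      have hrel : GMat.gad n m c' (h c' M') M
          = -(GMat.sgn c c') • GMat.gad n m c (h c M) M' := by
        have h2 := halt c (h c M) c' (h c' M')
        rw [hamM c' (h c' M') strhM' homhM', hW] at h2
        exact h2
      rw [hrel, GMat.gad_smul_right] at Hcl
      cases a <;> cases c <;> cases c' <;>
        norm_num [GMat.sgn] at Hcl ⊢ <;>
        (try rw [← sub_eq_zero]) <;>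
        (try rw [← Hcl]) <;>
        abel
    have hNeq := hUniq (Bool.xor c c') (ω c (h c M) c' (h c' M')) homW
      (GMat.gcomm c c' (h c M) (h c' M'))
      (GMat.str_gcomm homhM homhM') (GMat.homog_gcomm homhM homhM') hNchar
    rw [← hNeq]
    exact GMat.gad_gcomm homhM homhM' X
  · -- Part 2: kernel is the scalars
    intro c M hM
    obtain ⟨strh, homh, ham⟩ := hHam c M hM
    have hgg : GMat.Gamma n m * GMat.Gamma n m = 1 := GMat.Gamma_mul_Gamma
    constructor
    · intro hall
      have hzero : h c M = 0 := by
        cases c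
        · -- even: h c M commutes with everything
          have hcomm : ∀ i j : Fin (n+m), i ≠ j →
              Matrix.single i j (1:ℂ) * h false M
                = h false M * Matrix.single i j (1:ℂ) := by
            intro i j hij
            have h1 := hall (Matrix.single i j (1:ℂ))
            rw [GMat.gad, if_neg (by simp), sub_eq_zero] at h1
            exact h1.symm
          obtain ⟨k, hk⟩ := GMat.scalar_of_comm_units hnm hcomm
          have : GMat.str n m (h false M) = k * ((n:ℂ) - m) := by
            rw [hk, GMat.str_smul, GMat.str_one]
          rw [strh] at this
          have hk0 : k = 0 := by
            rcases mul_eq_zero.mp this.symm with hk0 | hc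
            · exact hk0
            · exact absurd hc hne
          rw [hk, hk0, zero_smul]
        · -- odd: use Γ
          have h1 := hall (GMat.Gamma n m)
          rw [GMat.gad, if_pos rfl] at h1
          have h2 : GMat.Gamma n m * GMat.Gamma n m * GMat.Gamma n m = GMat.Gamma n m := by
            rw [hgg, one_mul]
          rw [h2, sub_eq_zero] at h1
          have h3 : GMat.Gamma n m * h true M * GMat.Gamma n m = -(h true M) := by
            have := GMat.conj_homog homh
            norm_num [GMat.sgn] at this
            exact this
          have h4 : GMat.Gamma n m * h true M = -(h true M * GMat.Gamma n m) := by
            calc GMat.Gamma n m * h true M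
                = (GMat.Gamma n m * h true M * GMat.Gamma n m) * GMat.Gamma n m := by
                  rw [mul_assoc (GMat.Gamma n m * h true M), hgg, mul_one]
              _ = -(h true M * GMat.Gamma n m) := by rw [h3, neg_mul]
          have h5 : h true M * GMat.Gamma n m = 0 := by
            have h6 := h4
            rw [← h1] at h6
            have h7 : (2:ℂ) • (h true M * GMat.Gamma n m) = 0 := by
              rw [two_smul]
              nth_rewrite 2 [h6]
              rw [add_neg_cancel]
            exact (smul_eq_zero.mp h7).resolve_left (by norm_num)
          calc h true M = h true M * (GMat.Gamma n m * GMat.Gamma n m) := by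
                rw [hgg, mul_one]
            _ = (h true M * GMat.Gamma n m) * GMat.Gamma n m := by rw [mul_assoc]
            _ = 0 := by rw [h5, zero_mul]
      apply GMat.scalar_of_gad_zero hnm hM
      intro a E hstr homE
      have hh := ham a E hstr homE
      rw [hzero, hω0] at hh
      exact hh.symm
    · rintro ⟨k, rfl⟩
      have hzero : (0 : GMat n m) = h c (k • 1) := by
        apply hUniq c (k • 1) hM 0 GMat.str_zero (GMat.homog_zero c)
        intro a E hstr homE
        rw [hω0, GMat.gad_smul_one]
      intro X
      rw [← hzero]
      exact GMat.gad_zero_left c X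
  · -- Part 3: every graded derivation is Hamiltonian
    intro ε D hD
    obtain ⟨E₀, homE, strE, hDE⟩ := GMat.gder_inner hnm hD
    -- the submodule of homogeneous supertraceless matrices
    set V : Submodule ℂ (GMat n m) :=
      { carrier := {Z | GMat.IsHomog n m ε Z ∧ GMat.str n m Z = 0},
        add_mem' := fun hZ hW => ⟨GMat.homog_add hZ.1 hW.1,
          by rw [GMat.str_add, hZ.2, hW.2, add_zero]⟩,
        zero_mem' := ⟨GMat.homog_zero ε, GMat.str_zero⟩,
        smul_mem' := fun k Z hZ => ⟨GMat.homog_smul k hZ.1,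
          by rw [GMat.str_smul, hZ.2, mul_zero]⟩ } with hV
    have hmem : ∀ Z : GMat n m, Z ∈ V ↔ GMat.IsHomog n m ε Z ∧ GMat.str n m Z = 0 := by
      intro Z; rw [hV]; exact Iff.rfl
    have hlin_add : ∀ (Z W : GMat n m), GMat.IsHomog n m ε Z → GMat.IsHomog n m ε W →
        h ε Z + h ε W = h ε (Z + W) := by
      intro Z W hZ hW
      apply hUniq ε (Z + W) (GMat.homog_add hZ hW)
      · rw [GMat.str_add, (hHam ε Z hZ).1, (hHam ε W hW).1, add_zero]
      · exact GMat.homog_add (hHam ε Z hZ).2.1 (hHam ε W hW).2.1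
      · intro a E hstr homE
        rw [hadd2, (hHam ε Z hZ).2.2 a E hstr homE, (hHam ε W hW).2.2 a E hstr homE,
          GMat.gad_add_right]
    have hlin_smul : ∀ (k : ℂ) (Z : GMat n m), GMat.IsHomog n m ε Z →
        k • h ε Z = h ε (k • Z) := by
      intro k Z hZ
      apply hUniq ε (k • Z) (GMat.homog_smul k hZ)
      · rw [GMat.str_smul, (hHam ε Z hZ).1, mul_zero]
      · exact GMat.homog_smul k (hHam ε Z hZ).2.1
      · intro a E hstr homE
        rw [hsmul2, (hHam ε Z hZ).2.2 a E hstr homE, GMat.gad_smul_right]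
    set φ : V →ₗ[ℂ] V :=
      { toFun := fun Z => ⟨h ε Z.1, (hHam ε Z.1 Z.2.1).2.1, (hHam ε Z.1 Z.2.1).1⟩,
        map_add' := by
          rintro ⟨Z, hZ⟩ ⟨W, hW⟩
          apply Subtype.ext
          exact (hlin_add Z W hZ.1 hW.1).symm,
        map_smul' := by
          rintro k ⟨Z, hZ⟩
          apply Subtype.ext
          exact (hlin_smul k Z hZ.1).symm } with hφ
    have hinj : Function.Injective φ := by
      rw [injective_iff_map_eq_zero]
      rintro ⟨Z, hZ⟩ hzero
      have hz : h ε Z = 0 := congrArg Subtype.val hzero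
      apply Subtype.ext
      have hgadzero : ∀ (a : Bool) (E : GMat n m), GMat.str n m E = 0 →
          GMat.IsHomog n m a E → GMat.gad n m a E Z = 0 := by
        intro a E hstr homE
        have hh := (hHam ε Z hZ.1).2.2 a E hstr homE
        rw [hz, hω0] at hh
        exact hh.symm
      obtain ⟨k, hk⟩ := GMat.scalar_of_gad_zero hnm hZ.1 hgadzero
      have : GMat.str n m Z = k * ((n:ℂ) - m) := by
        rw [hk, GMat.str_smul, GMat.str_one]
      rw [hZ.2] at this
      have hk0 : k = 0 := by
        rcases mul_eq_zero.mp this.symm with hk0 | hc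
        · exact hk0
        · exact absurd hc hne
      show Z = 0
      rw [hk, hk0, zero_smul]
    have hsurj : Function.Surjective φ := LinearMap.injective_iff_surjective.mp hinj
    obtain ⟨Zpre, hZpre⟩ := hsurj ⟨E₀, homE, strE⟩
    refine ⟨Zpre.1, Zpre.2.1, ?_⟩
    intro X
    rw [hDE X]
    have hval : h ε Zpre.1 = E₀ := congrArg Subtype.val hZpre
    rw [hval]

end
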